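/- Let λ₁, λ₂ : ℝ → ℂ be differentiable and let x : ℝ → ℂ be twice differentiable with (d/dt - λ₂)(d/dt - λ₁) x = 0, i.e. ẍ - (λ₁ + λ₂)ẋ + (λ₁λ₂ - λ̇₁)x = 0. If Re(λ₁(t)) ≤ -c and Re(λ₂(t)) ≤ -c for a constant c > 0 and all t ≥ 0, then x(t) → 0 as t → ∞. -/

import Mathlib

open Filter

/-- Re of an integral of a continuous complex function with real part ≤ -c on [0,∞). -/
lemma re_integral_le_aux (l : ℝ → ℂ) (hl : Continuous l) (c : ℝ)
    (hre : ∀ t ≥ (0:ℝ), (l t).re ≤ -c) {s t : ℝ} (hs : 0 ≤ s) (hst : s ≤ t) :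
    ((∫ u in (0:ℝ)..t, l u) - ∫ u in (0:ℝ)..s, l u).re ≤ -c * (t - s) := by
  rw [intervalIntegral.integral_interval_sub_left (hl.intervalIntegrable 0 t)
    (hl.intervalIntegrable 0 s)]
  have h1 : ((∫ u in s..t, l u)).re = ∫ u in s..t, (l u).re := by
    simpa using (Complex.reCLM.intervalIntegral_comp_comm
      (μ := MeasureTheory.volume) (hl.intervalIntegrable s t)).symm
  rw [h1]
  calc ∫ u in s..t, (l u).re ≤ ∫ _u in s..t, -c := by
        apply intervalIntegral.integral_mono_on hst
          ((Complex.continuous_re.comp hl).intervalIntegrable s t)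
          (intervalIntegrable_const)
        intro u hu
        exact hre u (le_trans hs hu.1)
    _ = -c * (t - s) := by simp [mul_comm]

theorem complex_factored_second_order_convergence
    (x x' x'' l₁ l₁' l₂ : ℝ → ℂ) (c : ℝ) (hc : 0 < c)
    (hx : ∀ t, HasDerivAt x (x' t) t)
    (hx' : ∀ t, HasDerivAt x' (x'' t) t)
    (hl₁ : ∀ t, HasDerivAt l₁ (l₁' t) t)
    (hl₂ : Continuous l₂)
    (hode : ∀ t, x'' t - (l₁ t + l₂ t) * x' t + (l₁ t * l₂ t - l₁' t) * x t = 0)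
    (hre₁ : ∀ t ≥ (0 : ℝ), (l₁ t).re ≤ -c)
    (hre₂ : ∀ t ≥ (0 : ℝ), (l₂ t).re ≤ -c) :
    Tendsto x atTop (nhds 0) := by
  have hl₁c : Continuous l₁ :=
    continuous_iff_continuousAt.2 fun t => (hl₁ t).continuousAt
  -- antiderivatives
  set L₁ : ℝ → ℂ := fun t => ∫ s in (0:ℝ)..t, l₁ s with hL₁def
  set L₂ : ℝ → ℂ := fun t => ∫ s in (0:ℝ)..t, l₂ s with hL₂def
  have hL₁ : ∀ t, HasDerivAt L₁ (l₁ t) t := fun t =>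
    (hl₁c.integral_hasStrictDerivAt 0 t).hasDerivAt
  have hL₂ : ∀ t, HasDerivAt L₂ (l₂ t) t := fun t =>
    (hl₂.integral_hasStrictDerivAt 0 t).hasDerivAt
  have hL₁0 : L₁ 0 = 0 := by simp [hL₁def]
  have hL₂0 : L₂ 0 = 0 := by simp [hL₂def]
  have hL₁re : ∀ s t : ℝ, 0 ≤ s → s ≤ t → (L₁ t - L₁ s).re ≤ -c * (t - s) :=
    fun s t hs hst => re_integral_le_aux l₁ hl₁c c hre₁ hs hst
  have hL₂re : ∀ t : ℝ, 0 ≤ t → (L₂ t).re ≤ -c * t := by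
    intro t ht
    have := re_integral_le_aux l₂ hl₂ c hre₂ le_rfl ht
    simpa [hL₂0] using this
  -- the auxiliary function y
  set y : ℝ → ℂ := fun t => x' t - l₁ t * x t with hydef
  have hy : ∀ t, HasDerivAt y (l₂ t * y t) t := by
    intro t
    have h := (hx' t).sub ((hl₁ t).mul (hx t))
    refine h.congr_deriv ?_
    try simp only [hydef]
    linear_combination hode t
  have hyc : Continuous y :=
    continuous_iff_continuousAt.2 fun t => (hy t).continuousAt
  -- y satisfies y t = y 0 * exp (L₂ t)
  have hyform : ∀ t, y t = y 0 * Complex.exp (L₂ t) := by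
    have hg : ∀ t, HasDerivAt (fun t => y t * Complex.exp (-(L₂ t))) 0 t := by
      intro t
      have h := (hy t).mul ((hL₂ t).neg.cexp)
      refine h.congr_deriv ?_
      simp only [Pi.neg_apply]; ring
    have hconst : ∀ t, y t * Complex.exp (-(L₂ t)) = y 0 * Complex.exp (-(L₂ 0)) :=
      fun t => is_const_of_deriv_eq_zero (fun s => (hg s).differentiableAt)
        (fun s => (hg s).deriv) t 0
    intro t
    have h := hconst t
    rw [hL₂0, neg_zero, Complex.exp_zero, mul_one] at h
    calc y t = y t * Complex.exp (-(L₂ t)) * Complex.exp (L₂ t) := by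
          rw [mul_assoc, ← Complex.exp_add]; simp
      _ = y 0 * Complex.exp (L₂ t) := by rw [h]
  -- norm bound on y
  have hybound : ∀ t : ℝ, 0 ≤ t → ‖y t‖ ≤ ‖y 0‖ * Real.exp (-c * t) := by
    intro t ht
    rw [hyform t, norm_mul, Complex.norm_exp]
    exact mul_le_mul_of_nonneg_left (Real.exp_le_exp.2 (hL₂re t ht)) (norm_nonneg _)
  -- x satisfies x' = l₁ x + y; integrating factor
  have hh : ∀ t, HasDerivAt (fun t => x t * Complex.exp (-(L₁ t)))
      (y t * Complex.exp (-(L₁ t))) t := by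
    intro t
    have h := (hx t).mul ((hL₁ t).neg.cexp)
    refine h.congr_deriv ?_
    simp only [hydef, Pi.neg_apply]
    ring
  -- FTC : for t ≥ 0
  have key : ∀ t : ℝ, 0 ≤ t →
      x t = (x 0 + ∫ s in (0:ℝ)..t, y s * Complex.exp (-(L₁ s))) * Complex.exp (L₁ t) := by
    intro t ht
    have hcont : Continuous fun s => y s * Complex.exp (-(L₁ s)) := by
      apply hyc.mul
      exact Complex.continuous_exp.comp
        (continuous_iff_continuousAt.2 fun s => ((hL₁ s).neg.continuousAt))
    have hint := intervalIntegral.integral_eq_sub_of_hasDerivAt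
      (f := fun t => x t * Complex.exp (-(L₁ t)))
      (fun s _ => hh s) (hcont.intervalIntegrable 0 t)
    simp only [hL₁0, neg_zero, Complex.exp_zero, mul_one] at hint
    have h2 : x t * Complex.exp (-(L₁ t)) =
        x 0 + ∫ s in (0:ℝ)..t, y s * Complex.exp (-(L₁ s)) := by
      rw [hint]; ring
    calc x t = x t * Complex.exp (-(L₁ t)) * Complex.exp (L₁ t) := by
          rw [mul_assoc, ← Complex.exp_add]; simp
      _ = _ := by rw [h2]
  -- norm bound on x
  have hxbound : ∀ t : ℝ, 0 ≤ t →
      ‖x t‖ ≤ (‖x 0‖ + ‖y 0‖ * t) * Real.exp (-c * t) := by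
    intro t ht
    rw [key t ht, add_mul]
    refine le_trans (norm_add_le _ _) ?_
    have e1 : ‖x 0 * Complex.exp (L₁ t)‖ ≤ ‖x 0‖ * Real.exp (-c * t) := by
      rw [norm_mul, Complex.norm_exp]
      have : (L₁ t).re ≤ -c * t := by
        have := hL₁re 0 t le_rfl ht
        simpa [hL₁0] using this
      exact mul_le_mul_of_nonneg_left (Real.exp_le_exp.2 this) (norm_nonneg _)
    have e2 : ‖(∫ s in (0:ℝ)..t, y s * Complex.exp (-(L₁ s))) * Complex.exp (L₁ t)‖
        ≤ ‖y 0‖ * t * Real.exp (-c * t) := by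
      have hmove : (∫ s in (0:ℝ)..t, y s * Complex.exp (-(L₁ s))) * Complex.exp (L₁ t)
          = ∫ s in (0:ℝ)..t, y s * Complex.exp (L₁ t - L₁ s) := by
        rw [← intervalIntegral.integral_mul_const]
        congr 1; funext s
        rw [mul_assoc, ← Complex.exp_add]
        congr 2; ring
      rw [hmove]
      have hb : ∀ s ∈ Set.Ioc (min (0:ℝ) t) (max 0 t),
          ‖y s * Complex.exp (L₁ t - L₁ s)‖ ≤ ‖y 0‖ * Real.exp (-c * t) := by
        intro s hs
        rw [min_eq_left ht, max_eq_right ht] at hs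
        have hs0 : 0 ≤ s := le_of_lt hs.1
        rw [norm_mul, Complex.norm_exp]
        calc ‖y s‖ * Real.exp ((L₁ t - L₁ s).re)
            ≤ (‖y 0‖ * Real.exp (-c * s)) * Real.exp (-c * (t - s)) := by
              apply mul_le_mul (hybound s hs0)
                (Real.exp_le_exp.2 (hL₁re s t hs0 hs.2)) (Real.exp_pos _).le
              positivity
          _ = ‖y 0‖ * Real.exp (-c * t) := by
              rw [mul_assoc, ← Real.exp_add]; ring_nf
      calc ‖∫ s in (0:ℝ)..t, y s * Complex.exp (L₁ t - L₁ s)‖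
          ≤ ‖y 0‖ * Real.exp (-c * t) * |t - 0| :=
            intervalIntegral.norm_integral_le_of_norm_le_const hb
        _ = ‖y 0‖ * t * Real.exp (-c * t) := by
            rw [sub_zero, abs_of_nonneg ht]; ring
    linarith
  -- conclude by squeezing
  have hlim : Tendsto (fun t : ℝ => (‖x 0‖ + ‖y 0‖ * t) * Real.exp (-c * t))
      atTop (nhds 0) := by
    have h1 : Tendsto (fun t : ℝ => ‖x 0‖ * Real.exp (-c * t)) atTop (nhds 0) := by
      have := (Real.tendsto_exp_neg_atTop_nhds_zero.comp
        (tendsto_id.const_mul_atTop hc))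
      have h := this.const_mul ‖x 0‖
      simpa [Function.comp, neg_mul, mul_comm] using h
    have h2 : Tendsto (fun t : ℝ => ‖y 0‖ * t * Real.exp (-c * t)) atTop (nhds 0) := by
      have hcomp := (Real.tendsto_pow_mul_exp_neg_atTop_nhds_zero 1).comp
        (tendsto_id.const_mul_atTop hc)
      have h := hcomp.const_mul (‖y 0‖ / c)
      rw [mul_zero] at h
      refine h.congr fun t => ?_
      simp only [Function.comp, pow_one, id_eq]
      field_simp
    have h3 := h1.add h2
    rw [add_zero] at h3
    exact h3.congr fun t => by ring
  refine squeeze_zero_norm' ?_ hlim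
  filter_upwards [eventually_ge_atTop (0:ℝ)] with t ht
  exact hxbound t ht
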